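/- Under the GAS identifiability conditions, the rank of the concatenated column-centered natural parameter matrix (Θ̃1, Θ̃2) = (U0V1ᵀ + U1A1ᵀ, U0V2ᵀ + U2A2ᵀ) is exactly r0 + r1 + r2, and rank(Θ̃k) = r0 + rk for k = 1, 2. -/

import Mathlib

open Matrix BigOperators

/-- Frobenius norm of a real matrix. -/
noncomputable def frobNorm {m n : Type*} [Fintype m] [Fintype n]
    (X : Matrix m n ℝ) : ℝ :=
  Real.sqrt (∑ i, ∑ j, (X i j) ^ 2)

/-- Nuclear norm: sum of singular values, i.e. the sum of the square roots of
the eigenvalues of `Xᴴ * X`. -/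
noncomputable def nuclearNorm {m n : Type*} [Fintype m] [Fintype n] [DecidableEq n]
    (X : Matrix m n ℝ) : ℝ :=
  ∑ i, Real.sqrt ((show (Xᵀ * X).IsHermitian by
    rw [← Matrix.conjTranspose_eq_transpose_of_trivial]
    exact Matrix.isHermitian_conjTranspose_mul_self X).eigenvalues i)

section gasHelpers
open Module
variable {m n l : Type*} [Fintype m] [Fintype n] [Fintype l]

lemma gasInjOfRank [DecidableEq n] (M : Matrix m n ℝ) (h : M.rank = Fintype.card n) :
    Function.Injective M.mulVecLin := by
  rw [← LinearMap.ker_eq_bot]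
  have h2 := LinearMap.finrank_range_add_finrank_ker M.mulVecLin
  rw [Matrix.rank] at h
  rw [h, finrank_pi] at h2
  have : finrank ℝ (LinearMap.ker M.mulVecLin) = 0 := by omega
  exact Submodule.finrank_eq_zero.mp this

omit [Fintype m] in
lemma gasRankOfInj [DecidableEq n] (M : Matrix m n ℝ) (h : Function.Injective M.mulVecLin) :
    M.rank = Fintype.card n := by
  rw [Matrix.rank, LinearMap.finrank_range_of_inj h, finrank_pi]

lemma gasSurjOfRank [DecidableEq n] (M : Matrix m n ℝ) (h : M.rank = Fintype.card m) :
    Function.Surjective M.mulVecLin := by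
  rw [← LinearMap.range_eq_top]
  apply Submodule.eq_top_of_finrank_eq
  rw [Matrix.rank] at h
  rw [h, finrank_pi]

lemma gasRankMul [DecidableEq n] [DecidableEq m] (B : Matrix l m ℝ) (C : Matrix m n ℝ)
    (hB : Function.Injective B.mulVecLin) (hC : Function.Surjective C.mulVecLin) :
    (B * C).rank = Fintype.card m := by
  rw [Matrix.rank, Matrix.mulVecLin_mul, LinearMap.range_comp,
    LinearMap.range_eq_top.mpr hC, Submodule.map_top, ← Matrix.rank, gasRankOfInj B hB]

lemma gasSelfZero (M : Matrix m n ℝ) (x : n → ℝ)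
    (h : Mᵀ.mulVec (M.mulVec x) = 0) : M.mulVec x = 0 := by
  have : (M.mulVec x) ⬝ᵥ (M.mulVec x) = 0 := by
    rw [dotProduct_mulVec, ← mulVec_transpose, h, zero_dotProduct]
  exact (dotProduct_self_eq_zero).mp this

/-- Injectivity of a horizontally concatenated matrix whose first block is
orthogonal to the second. -/
lemma gasFromColumnsInj {a b : Type*} [Fintype a] [Fintype b] [DecidableEq a] [DecidableEq b]
    (P : Matrix m a ℝ) (Q : Matrix m b ℝ)
    (hP : Function.Injective P.mulVecLin) (hQ : Function.Injective Q.mulVecLin)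
    (horth : Pᵀ * Q = 0) :
    Function.Injective (Matrix.fromCols P Q).mulVecLin := by
  rw [← LinearMap.ker_eq_bot, LinearMap.ker_eq_bot']
  intro x hx
  have hxe : (Matrix.fromCols P Q).mulVec (Sum.elim (x ∘ Sum.inl) (x ∘ Sum.inr)) = 0 := by
    have hxx : Sum.elim (x ∘ Sum.inl) (x ∘ Sum.inr) = x := by ext (i | i) <;> rfl
    rw [hxx]; simpa [Matrix.mulVecLin_apply] using hx
  rw [Matrix.fromCols_mulVec_sumElim] at hxe
  have hP0 : P.mulVec (x ∘ Sum.inl) = 0 := by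
    apply gasSelfZero
    have h1 : Pᵀ.mulVec (P.mulVec (x ∘ Sum.inl)) + Pᵀ.mulVec (Q.mulVec (x ∘ Sum.inr)) = 0 := by
      rw [← Matrix.mulVec_add, hxe, Matrix.mulVec_zero]
    have h2 : Pᵀ.mulVec (Q.mulVec (x ∘ Sum.inr)) = 0 := by
      rw [Matrix.mulVec_mulVec, horth, Matrix.zero_mulVec]
    rw [h2, add_zero] at h1
    exact h1
  have hQ0 : Q.mulVec (x ∘ Sum.inr) = 0 := by
    rw [hP0, zero_add] at hxe
    exact hxe
  have ha : x ∘ Sum.inl = 0 := hP (by simpa [Matrix.mulVecLin_apply] using hP0)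
  have hb : x ∘ Sum.inr = 0 := hQ (by simpa [Matrix.mulVecLin_apply] using hQ0)
  ext (i | i)
  · exact congrFun ha i
  · exact congrFun hb i

lemma gasFromColumnsAdd {a b : Type*} (X Z : Matrix m a ℝ) (Y W : Matrix m b ℝ) :
    Matrix.fromCols X Y + Matrix.fromCols Z W = Matrix.fromCols (X + Z) (Y + W) := by
  ext i (j | j) <;> simp [Matrix.fromCols]

end gasHelpers

/-- Injectivity of the transposed coefficient matrix for the concatenated model. -/
lemma gasCInj {p1 p2 r0 r1 r2 : ℕ}
    (V1 : Matrix (Fin p1) (Fin r0) ℝ) (V2 : Matrix (Fin p2) (Fin r0) ℝ)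
    (A1 : Matrix (Fin p1) (Fin r1) ℝ) (A2 : Matrix (Fin p2) (Fin r2) ℝ)
    (hVA1 : Function.Injective (Matrix.fromCols V1 A1).mulVecLin)
    (hA2 : A2ᵀ * A2 = 1) :
    Function.Injective
      (Matrix.fromCols (Matrix.fromRows V1 V2)
        (Matrix.fromBlocks A1 0 0 A2)).mulVecLin := by
  rw [← LinearMap.ker_eq_bot, LinearMap.ker_eq_bot']
  intro x hx
  set a : Fin r0 → ℝ := x ∘ Sum.inl with ha
  set b : Fin r1 → ℝ := x ∘ Sum.inr ∘ Sum.inl with hb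
  set c : Fin r2 → ℝ := x ∘ Sum.inr ∘ Sum.inr with hc
  have hxx : Sum.elim a (x ∘ Sum.inr) = x := by ext (i | i) <;> rfl
  have hx0 : (Matrix.fromCols (Matrix.fromRows V1 V2)
      (Matrix.fromBlocks A1 0 0 A2)).mulVec (Sum.elim a (x ∘ Sum.inr)) = 0 := by
    rw [hxx]; simpa [Matrix.mulVecLin_apply] using hx
  rw [Matrix.fromCols_mulVec_sumElim, Matrix.fromRows_mulVec,
    Matrix.fromBlocks_mulVec] at hx0
  have h1 : V1.mulVec a + (A1.mulVec b + (0 : Matrix (Fin p1) (Fin r2) ℝ).mulVec c) = 0 := by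
    have := congrFun hx0
    ext i
    have h := this (Sum.inl i)
    simp at h ⊢
    exact h
  have h2 : V2.mulVec a + ((0 : Matrix (Fin p2) (Fin r1) ℝ).mulVec b + A2.mulVec c) = 0 := by
    have := congrFun hx0
    ext i
    have h := this (Sum.inr i)
    simp at h ⊢
    exact h
  rw [Matrix.zero_mulVec, add_zero] at h1
  rw [Matrix.zero_mulVec, zero_add] at h2
  have hab : Sum.elim a b = 0 := by
    apply hVA1
    simp only [Matrix.mulVecLin_apply, Matrix.fromCols_mulVec_sumElim, h1, map_zero]
  have ha0 : a = 0 := by ext i; exact congrFun hab (Sum.inl i)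
  have hb0 : b = 0 := by ext i; exact congrFun hab (Sum.inr i)
  have hc0 : c = 0 := by
    have hA2c : A2.mulVec c = 0 := by
      rw [ha0, Matrix.mulVec_zero, zero_add] at h2; exact h2
    calc c = (A2ᵀ * A2).mulVec c := by rw [hA2, Matrix.one_mulVec]
    _ = A2ᵀ.mulVec (A2.mulVec c) := by rw [Matrix.mulVec_mulVec]
    _ = 0 := by rw [hA2c, Matrix.mulVec_zero]
  ext (i | i | i)
  · exact congrFun ha0 i
  · exact congrFun hb0 i
  · exact congrFun hc0 i

/-- under the GAS identifiability conditions, the concatenated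
centered natural parameter matrix has rank `r0 + r1 + r2`, and the individual
matrices have ranks `r0 + r1` and `r0 + r2`. -/
theorem gas_ranks (n p1 p2 r0 r1 r2 : ℕ)
    (U0 : Matrix (Fin n) (Fin r0) ℝ)
    (U1 : Matrix (Fin n) (Fin r1) ℝ) (U2 : Matrix (Fin n) (Fin r2) ℝ)
    (V1 : Matrix (Fin p1) (Fin r0) ℝ) (V2 : Matrix (Fin p2) (Fin r0) ℝ)
    (A1 : Matrix (Fin p1) (Fin r1) ℝ) (A2 : Matrix (Fin p2) (Fin r2) ℝ)
    (hU0 : U0.rank = r0) (hU1 : U1.rank = r1) (hU2 : U2.rank = r2)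
    (hU01 : U0ᵀ * U1 = 0) (hU02 : U0ᵀ * U2 = 0)
    (hU12 : (Matrix.fromCols U1 U2).rank = r1 + r2)
    (hV : V1ᵀ * V1 + V2ᵀ * V2 = 1) (hA1 : A1ᵀ * A1 = 1) (hA2 : A2ᵀ * A2 = 1)
    (hJ1 : (U0 * V1ᵀ).rank = r0) (hJ2 : (U0 * V2ᵀ).rank = r0)
    (hVA1 : (Matrix.fromCols V1 A1).rank = r0 + r1)
    (hVA2 : (Matrix.fromCols V2 A2).rank = r0 + r2) :
    (Matrix.fromCols (U0 * V1ᵀ + U1 * A1ᵀ) (U0 * V2ᵀ + U2 * A2ᵀ)).rank = r0 + r1 + r2 ∧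
      (U0 * V1ᵀ + U1 * A1ᵀ).rank = r0 + r1 ∧
      (U0 * V2ᵀ + U2 * A2ᵀ).rank = r0 + r2 := by
  -- injectivity of the left factors
  have hU0i : Function.Injective U0.mulVecLin := gasInjOfRank U0 (by simpa using hU0)
  have hU1i : Function.Injective U1.mulVecLin := gasInjOfRank U1 (by simpa using hU1)
  have hU2i : Function.Injective U2.mulVecLin := gasInjOfRank U2 (by simpa using hU2)
  have hWi : Function.Injective (Matrix.fromCols U1 U2).mulVecLin :=
    gasInjOfRank _ (by simpa using hU12)
  have hB1i : Function.Injective (Matrix.fromCols U0 U1).mulVecLin :=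
    gasFromColumnsInj U0 U1 hU0i hU1i hU01
  have hB2i : Function.Injective (Matrix.fromCols U0 U2).mulVecLin :=
    gasFromColumnsInj U0 U2 hU0i hU2i hU02
  have hBi : Function.Injective
      (Matrix.fromCols U0 (Matrix.fromCols U1 U2)).mulVecLin := by
    apply gasFromColumnsInj U0 _ hU0i hWi
    rw [Matrix.mul_fromCols, hU01, hU02, Matrix.fromCols_zero]
  -- injectivity of the (transposed) right factors
  have hVA1i : Function.Injective (Matrix.fromCols V1 A1).mulVecLin :=
    gasInjOfRank _ (by simpa using hVA1)
  have hVA2i : Function.Injective (Matrix.fromCols V2 A2).mulVecLin :=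
    gasInjOfRank _ (by simpa using hVA2)
  -- surjectivity of right factors
  have hC1s : Function.Surjective ((Matrix.fromCols V1 A1)ᵀ).mulVecLin := by
    apply gasSurjOfRank
    rw [Matrix.rank_transpose]
    simpa using hVA1
  have hC2s : Function.Surjective ((Matrix.fromCols V2 A2)ᵀ).mulVecLin := by
    apply gasSurjOfRank
    rw [Matrix.rank_transpose]
    simpa using hVA2
  set C : Matrix (Fin r0 ⊕ (Fin r1 ⊕ Fin r2)) (Fin p1 ⊕ Fin p2) ℝ :=
    Matrix.fromRows (Matrix.fromCols V1ᵀ V2ᵀ) (Matrix.fromBlocks A1ᵀ 0 0 A2ᵀ) with hC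
  have hCT : Cᵀ = Matrix.fromCols (Matrix.fromRows V1 V2)
      (Matrix.fromBlocks A1 0 0 A2) := by
    rw [hC, Matrix.transpose_fromRows, Matrix.transpose_fromCols,
      Matrix.fromBlocks_transpose]
    simp
  have hCs : Function.Surjective C.mulVecLin := by
    apply gasSurjOfRank
    rw [← Matrix.rank_transpose, hCT,
      gasRankOfInj _ (gasCInj V1 V2 A1 A2 hVA1i hA2)]
  -- factorizations
  have hfac1 : U0 * V1ᵀ + U1 * A1ᵀ =
      Matrix.fromCols U0 U1 * (Matrix.fromCols V1 A1)ᵀ := by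
    rw [Matrix.transpose_fromCols, Matrix.fromCols_mul_fromRows]
  have hfac2 : U0 * V2ᵀ + U2 * A2ᵀ =
      Matrix.fromCols U0 U2 * (Matrix.fromCols V2 A2)ᵀ := by
    rw [Matrix.transpose_fromCols, Matrix.fromCols_mul_fromRows]
  have hfac : Matrix.fromCols (U0 * V1ᵀ + U1 * A1ᵀ) (U0 * V2ᵀ + U2 * A2ᵀ) =
      Matrix.fromCols U0 (Matrix.fromCols U1 U2) * C := by
    rw [hC, Matrix.fromCols_mul_fromRows, Matrix.mul_fromCols,
      Matrix.fromCols_mul_fromBlocks, gasFromColumnsAdd]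
    simp
  refine ⟨?_, ?_, ?_⟩
  · rw [hfac, gasRankMul _ _ hBi hCs]
    simp [Fintype.card_sum]
    omega
  · rw [hfac1, gasRankMul _ _ hB1i hC1s]
    simp [Fintype.card_sum]
  · rw [hfac2, gasRankMul _ _ hB2i hC2s]
    simp [Fintype.card_sum]
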